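/- arXiv:2105.07535 — 2 statements merged into one kernel-verified Lean document; each statement's English description precedes it below -/
import Mathlib

section
/- Lower bound on the probability of the conditionally typical set: let p_{X,Y} match a joint type P with X-marginal Q, and suppose x ∈ A*_{ε/(2|Y|)}^(n)(Q). Then Pr(p_{Y|X}, A*_ε^(n)(P|x) | x) > 1 − δ_t(n, ε/2, X×Y), where δ_t(n,ε,X×Y) = (n+1)^{|X||Y|}·exp(−n·ε²·log e/(2|X|²|Y|²)), and Pr(p_{Y|X}, A | x) = Σ_{y∈A} Π_i p_{Y|X}(y_i|x_i). In particular this probability tends to 1 as n → ∞. -/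
open Finset Filter

/-- Empirical type of a sequence. -/
noncomputable def empType {Z : Type*} [Fintype Z] [DecidableEq Z] {n : ℕ}
    (z : Fin n → Z) (a : Z) : ℝ :=
  ((Finset.univ.filter (fun k : Fin n => z k = a)).card : ℝ) / n

/-- Joint empirical type of a pair of sequences. -/
noncomputable def jointType {X Y : Type*} [Fintype X] [Fintype Y]
    [DecidableEq X] [DecidableEq Y] {n : ℕ}
    (x : Fin n → X) (y : Fin n → Y) (a : X) (b : Y) : ℝ :=
  ((Finset.univ.filter (fun k : Fin n => x k = a ∧ y k = b)).card : ℝ) / n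

/-- Strongly ε-typical set for single sequences. -/
def typSet {X : Type*} [Fintype X] [DecidableEq X] (n : ℕ)
    (Q : X → ℝ) (ε : ℝ) : Set (Fin n → X) :=
  {x | (∀ a, |empType x a - Q a| < ε / (Fintype.card X)) ∧
       (∀ a, Q a = 0 → empType x a = 0)}

/-- Strongly jointly ε-typical set. -/
def jointTypSet {X Y : Type*} [Fintype X] [Fintype Y]
    [DecidableEq X] [DecidableEq Y] (n : ℕ)
    (P : X → Y → ℝ) (ε : ℝ) : Set ((Fin n → X) × (Fin n → Y)) :=
  {q | (∀ a b, |jointType q.1 q.2 a b - P a b| <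
          ε / ((Fintype.card X) * (Fintype.card Y))) ∧
       (∀ a b, P a b = 0 → jointType q.1 q.2 a b = 0)}

/-- Strongly conditionally typical set. -/
def condTypSet {X Y : Type*} [Fintype X] [Fintype Y]
    [DecidableEq X] [DecidableEq Y] (n : ℕ)
    (P : X → Y → ℝ) (ε : ℝ) (x : Fin n → X) : Set (Fin n → Y) :=
  {y | (x, y) ∈ jointTypSet n P ε}


/-- The quantity δ_t(n, ε, X×Y). -/
noncomputable def deltaT (X Y : Type*) [Fintype X] [Fintype Y]
    (n : ℕ) (ε : ℝ) : ℝ :=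
  ((n : ℝ) + 1) ^ (Fintype.card X * Fintype.card Y) *
    Real.exp (-(n : ℝ) * ε ^ 2 * Real.log (Real.exp 1) /
      (2 * (Fintype.card X : ℝ) ^ 2 * (Fintype.card Y : ℝ) ^ 2))

/-- Bernoulli mgf bound (weak Hoeffding lemma, constant 1/4). -/
lemma bern_mgf_le (p L : ℝ) (hp0 : 0 ≤ p) (hp1 : p ≤ 1) :
    1 - p + p * Real.exp L ≤ Real.exp (p * L + L ^ 2 / 4) := by
  set D : ℝ → ℝ := fun u => 1 - p + p * Real.exp u with hDdef
  have hD : ∀ u, 0 < D u := by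
    intro u
    have he := Real.exp_pos u
    have h2 := mul_nonneg hp0 he.le
    rcases hp1.lt_or_eq with h | h
    · simp only [hDdef]; nlinarith
    · have hpe : 0 < p * Real.exp u := by rw [h]; simpa using he
      simp only [hDdef]; linarith
  have hDder : ∀ u, HasDerivAt D (p * Real.exp u) u := by
    intro u
    exact ((Real.hasDerivAt_exp u).const_mul p).const_add (1 - p)
  set φ : ℝ → ℝ := fun u => Real.log (D u) - p * u with hφdef
  set φ' : ℝ → ℝ := fun u => p * Real.exp u / D u - p with hφ'def
  have h1 : ∀ u, HasDerivAt φ (φ' u) u := by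
    intro u
    have hlog : HasDerivAt (fun u => Real.log (D u)) (p * Real.exp u / D u) u :=
      (hDder u).log (hD u).ne'
    exact (hlog.sub ((hasDerivAt_id u).const_mul p)).congr_deriv (by simp [hφ'def])
  have h2 : ∀ u, HasDerivAt φ' (p * Real.exp u * (1 - p) / (D u) ^ 2) u := by
    intro u
    have hnum : HasDerivAt (fun u => p * Real.exp u) (p * Real.exp u) u :=
      (Real.hasDerivAt_exp u).const_mul p
    have hdiv := hnum.div (hDder u) (hD u).ne'
    have heq : (p * Real.exp u * D u - p * Real.exp u * (p * Real.exp u)) / D u ^ 2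
        = p * Real.exp u * (1 - p) / (D u) ^ 2 := by
      simp only [hDdef]; try ring
    rw [heq] at hdiv
    simpa [hφ'def] using hdiv.sub_const p
  have hbound : ∀ u : ℝ, ‖p * Real.exp u * (1 - p) / (D u) ^ 2‖ ≤ 1 / 4 := by
    intro u
    have he := Real.exp_pos u
    have hA : 0 ≤ p * Real.exp u := mul_nonneg hp0 he.le
    have hB : 0 ≤ 1 - p := by linarith
    have hDu : D u = (1 - p) + p * Real.exp u := by simp only [hDdef]; try ring
    have hD2 : 0 < D u ^ 2 := pow_pos (hD u) 2
    rw [Real.norm_eq_abs, abs_of_nonneg (div_nonneg (mul_nonneg hA hB) hD2.le),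
      div_le_iff₀ hD2, hDu]
    nlinarith [sq_nonneg (p * Real.exp u - (1 - p))]
  have hφ'0 : φ' 0 = 0 := by simp [hφ'def, hDdef]
  have hmvt1 : ∀ u : ℝ, |φ' u| ≤ |u| / 4 := by
    intro u
    have := convex_univ.norm_image_sub_le_of_norm_hasDerivWithin_le
      (f := φ') (f' := fun u => p * Real.exp u * (1 - p) / (D u) ^ 2)
      (fun v _ => (h2 v).hasDerivWithinAt) (fun v _ => hbound v)
      (Set.mem_univ 0) (Set.mem_univ u)
    simp only [hφ'0, sub_zero, Real.norm_eq_abs] at this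
    linarith
  have hφ0 : φ 0 = 0 := by simp [hφdef, hDdef]
  have habs : ∀ u ∈ Set.uIcc (0:ℝ) L, ‖φ' u‖ ≤ |L| / 4 := by
    intro u hu
    have hL1 : L ≤ |L| := le_abs_self L
    have hL2 : -|L| ≤ L := neg_abs_le L
    have h0 : (0:ℝ) ≤ |L| := abs_nonneg L
    have huL : |u| ≤ |L| := by
      rcases Set.mem_uIcc.mp hu with ⟨ha, hb⟩ | ⟨ha, hb⟩ <;>
        (rw [abs_le]; constructor <;> linarith)
    calc ‖φ' u‖ = |φ' u| := rfl
      _ ≤ |u| / 4 := hmvt1 u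
      _ ≤ |L| / 4 := by linarith
  have hmvt2 := (convex_uIcc (0:ℝ) L).norm_image_sub_le_of_norm_hasDerivWithin_le
    (f := φ) (f' := φ') (fun v _ => (h1 v).hasDerivWithinAt) habs
    Set.left_mem_uIcc Set.right_mem_uIcc
  simp only [hφ0, sub_zero, Real.norm_eq_abs] at hmvt2
  have hφL : φ L ≤ L ^ 2 / 4 := by
    have h4 : |L| / 4 * |L| = L ^ 2 / 4 := by
      rw [div_mul_eq_mul_div, abs_mul_abs_self]; ring
    calc φ L ≤ |φ L| := le_abs_self _
      _ ≤ |L| / 4 * |L| := hmvt2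
      _ = L ^ 2 / 4 := h4
  have : Real.log (D L) ≤ p * L + L ^ 2 / 4 := by
    simp only [hφdef] at hφL; linarith
  have := (Real.log_le_iff_le_exp (hD L)).mp this
  simpa [hDdef] using this

/-- Chernoff-type tail bound for a product measure on `Fin n → Y`. -/
lemma chernoff_tail {Y : Type*} [Fintype Y] [DecidableEq Y] {n : ℕ}
    (w : Fin n → Y → ℝ) (hw0 : ∀ i b, 0 ≤ w i b) (hw1 : ∀ i, ∑ b, w i b = 1)
    (T : Finset (Fin n)) (b0 : Y) (p : ℝ)
    (hp : ∀ i ∈ T, w i b0 = p) (hp0 : 0 ≤ p) (hp1 : p ≤ 1) (L s : ℝ) :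
    ∑ y ∈ univ.filter (fun y : Fin n → Y =>
        s ≤ L * (((T.filter (fun k => y k = b0)).card : ℝ) - T.card * p)),
      ∏ i, w i (y i)
    ≤ Real.exp ((n : ℝ) * L ^ 2 / 4 - s) := by
  classical
  set c : Fin n → Y → ℝ :=
    fun i b => if i ∈ T then ((if b = b0 then (1:ℝ) else 0) - p) else 0 with hcdef
  have hsumc : ∀ y : Fin n → Y,
      ((T.filter (fun k => y k = b0)).card : ℝ) - T.card * p = ∑ i, c i (y i) := by
    intro y
    have h1 : ∑ i, c i (y i)
        = ∑ i ∈ T, ((if y i = b0 then (1:ℝ) else 0) - p) := by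
      rw [← Finset.sum_filter_add_sum_filter_not univ (· ∈ T)]
      have e1 : univ.filter (· ∈ T) = T := by ext i; simp
      have e2 : ∀ i ∈ univ.filter (· ∉ T), c i (y i) = 0 := by
        intro i hi; simp only [mem_filter] at hi; simp [hcdef, hi.2]
      rw [Finset.sum_eq_zero e2, add_zero, e1]
      refine Finset.sum_congr rfl fun i hi => ?_
      simp [hcdef, hi]
    rw [h1, Finset.sum_sub_distrib, Finset.sum_boole, Finset.sum_const, nsmul_eq_mul]
  -- the mgf estimate
  have hfac : ∀ i : Fin n, ∑ b, w i b * Real.exp (L * c i b)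
      ≤ (if i ∈ T then Real.exp (L ^ 2 / 4) else 1) := by
    intro i
    by_cases hi : i ∈ T
    · simp only [hi, if_true]
      have hsplit : ∑ b, w i b * Real.exp (L * c i b)
          = w i b0 * Real.exp (L * (1 - p)) +
            ∑ b ∈ univ.erase b0, w i b * Real.exp (L * (0 - p)) := by
        rw [← Finset.add_sum_erase _ _ (mem_univ b0)]
        congr 1
        · simp [hcdef, hi]
        · refine Finset.sum_congr rfl fun b hb => ?_
          have : b ≠ b0 := (Finset.mem_erase.mp hb).1
          simp [hcdef, hi, this]
      have herase : ∑ b ∈ univ.erase b0, w i b = 1 - w i b0 := by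
        rw [Finset.sum_erase_eq_sub (mem_univ b0), hw1 i]
      rw [hsplit, ← Finset.sum_mul, herase, hp i hi]
      have key := bern_mgf_le p L hp0 hp1
      have hexp : Real.exp (L * (1 - p)) = Real.exp (-(L * p)) * Real.exp L := by
        rw [← Real.exp_add]; ring_nf
      have hexp2 : Real.exp (L * (0 - p)) = Real.exp (-(L * p)) := by ring_nf
      rw [hexp, hexp2]
      have hpos := Real.exp_pos (-(L * p))
      calc p * (Real.exp (-(L * p)) * Real.exp L) + (1 - p) * Real.exp (-(L * p))
          = Real.exp (-(L * p)) * (1 - p + p * Real.exp L) := by ring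
        _ ≤ Real.exp (-(L * p)) * Real.exp (p * L + L ^ 2 / 4) := by
            exact mul_le_mul_of_nonneg_left key hpos.le
        _ = Real.exp (L ^ 2 / 4) := by rw [← Real.exp_add]; ring_nf
    · simp only [hi, if_false]
      have : ∀ b, w i b * Real.exp (L * c i b) = w i b := by
        intro b; simp [hcdef, hi]
      rw [Finset.sum_congr rfl fun b _ => this b, hw1 i]
  have hE : ∑ y : Fin n → Y, (∏ i, w i (y i)) * Real.exp (L * ∑ i, c i (y i))
      ≤ Real.exp ((n : ℝ) * L ^ 2 / 4) := by
    have h1 : ∀ y : Fin n → Y, (∏ i, w i (y i)) * Real.exp (L * ∑ i, c i (y i))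
        = ∏ i, (w i (y i) * Real.exp (L * c i (y i))) := by
      intro y
      rw [Finset.mul_sum, Real.exp_sum, ← Finset.prod_mul_distrib]
    rw [Finset.sum_congr rfl fun y _ => h1 y, ← Fintype.prod_sum
      (fun i b => w i b * Real.exp (L * c i b))]
    calc ∏ i, ∑ b, w i b * Real.exp (L * c i b)
        ≤ ∏ i, (if i ∈ T then Real.exp (L ^ 2 / 4) else 1) := by
          refine Finset.prod_le_prod (fun i _ => ?_) (fun i _ => hfac i)
          exact Finset.sum_nonneg fun b _ =>
            mul_nonneg (hw0 i b) (Real.exp_pos _).le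
      _ = Real.exp (L ^ 2 / 4) ^ T.card := by
          rw [Finset.prod_ite_mem, Finset.univ_inter, Finset.prod_const]
      _ = Real.exp (T.card * (L ^ 2 / 4)) := by
          rw [← Real.exp_nat_mul]
      _ ≤ Real.exp ((n : ℝ) * L ^ 2 / 4) := by
          apply Real.exp_le_exp.mpr
          have hTn : (T.card : ℝ) ≤ n := by
            exact_mod_cast Finset.card_le_card (Finset.subset_univ T) |>.trans
              (le_of_eq (Finset.card_univ.trans (Fintype.card_fin n)))
          nlinarith [sq_nonneg L, hTn]
  -- Markov
  calc ∑ y ∈ univ.filter (fun y : Fin n → Y =>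
        s ≤ L * (((T.filter (fun k => y k = b0)).card : ℝ) - T.card * p)),
      ∏ i, w i (y i)
      ≤ ∑ y ∈ univ.filter (fun y : Fin n → Y =>
        s ≤ L * (((T.filter (fun k => y k = b0)).card : ℝ) - T.card * p)),
        (∏ i, w i (y i)) * Real.exp (L * ∑ i, c i (y i) - s) := by
        refine Finset.sum_le_sum fun y hy => ?_
        have hys : s ≤ L * ∑ i, c i (y i) := by
          rw [← hsumc y]; exact (Finset.mem_filter.mp hy).2
        have h1 : (1:ℝ) ≤ Real.exp (L * ∑ i, c i (y i) - s) := by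
          rw [Real.one_le_exp_iff]; linarith
        have h0 : 0 ≤ ∏ i, w i (y i) := Finset.prod_nonneg fun i _ => hw0 i (y i)
        nlinarith
    _ ≤ ∑ y : Fin n → Y, (∏ i, w i (y i)) * Real.exp (L * ∑ i, c i (y i) - s) := by
        refine Finset.sum_le_sum_of_subset_of_nonneg (Finset.subset_univ _)
          fun y _ _ => ?_
        exact mul_nonneg (Finset.prod_nonneg fun i _ => hw0 i (y i))
          (Real.exp_pos _).le
    _ = Real.exp (-s) * ∑ y : Fin n → Y,
          (∏ i, w i (y i)) * Real.exp (L * ∑ i, c i (y i)) := by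
        rw [Finset.mul_sum]
        refine Finset.sum_congr rfl fun y _ => ?_
        rw [show L * ∑ i, c i (y i) - s = -s + L * ∑ i, c i (y i) from by ring,
          Real.exp_add]
        ring
    _ ≤ Real.exp (-s) * Real.exp ((n : ℝ) * L ^ 2 / 4) := by
        exact mul_le_mul_of_nonneg_left hE (Real.exp_pos _).le
    _ = Real.exp ((n : ℝ) * L ^ 2 / 4 - s) := by
        rw [← Real.exp_add]; ring_nf

lemma two_mul_le_two_pow (K : ℕ) : 2 * K ≤ 2 ^ K := by
  induction K with
  | zero => norm_num
  | succ k ih =>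
    rcases Nat.eq_zero_or_pos k with hk | hk
    · subst hk; norm_num
    · have h2 : 2 ≤ 2 ^ k := by
        calc 2 = 2 ^ 1 := rfl
        _ ≤ 2 ^ k := Nat.pow_le_pow_right (by norm_num) hk
      calc 2 * (k + 1) = 2 * k + 2 := by ring
        _ ≤ 2 ^ k + 2 ^ k := Nat.add_le_add ih h2
        _ = 2 ^ (k + 1) := by ring

lemma sum_union_le {β : Type*} [DecidableEq β] (A B : Finset β) (f : β → ℝ)
    (hf : ∀ b, 0 ≤ f b) : ∑ b ∈ A ∪ B, f b ≤ ∑ b ∈ A, f b + ∑ b ∈ B, f b := by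
  have h := Finset.sum_union_inter (s₁ := A) (s₂ := B) (f := f)
  have h2 : 0 ≤ ∑ b ∈ A ∩ B, f b := Finset.sum_nonneg fun b _ => hf b
  linarith

lemma sum_biUnion_le' {α β : Type*} [DecidableEq β] (s : Finset α)
    (t : α → Finset β) (f : β → ℝ) (hf : ∀ b, 0 ≤ f b) :
    ∑ b ∈ s.biUnion t, f b ≤ ∑ a ∈ s, ∑ b ∈ t a, f b := by
  classical
  induction s using Finset.induction_on with
  | empty => simp
  | @insert a s' h ih =>
    rw [Finset.biUnion_insert, Finset.sum_insert h]
    calc ∑ b ∈ t a ∪ s'.biUnion t, f b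
        ≤ ∑ b ∈ t a, f b + ∑ b ∈ s'.biUnion t, f b := sum_union_le _ _ f hf
      _ ≤ ∑ b ∈ t a, f b + ∑ a' ∈ s', ∑ b ∈ t a', f b := by linarith

/-- lower bound on the probability of the conditionally typical
set, and the fact that it tends to 1 as n → ∞. -/
theorem condTypSet_probability_lower_bound
    {X Y : Type*} [Fintype X] [Fintype Y] [DecidableEq X] [DecidableEq Y]
    [Nonempty X] [Nonempty Y]
    {n : ℕ} (P : X → Y → ℝ) (hP0 : ∀ a b, 0 ≤ P a b)
    (hP1 : ∑ a, ∑ b, P a b = 1)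
    (Q : X → ℝ) (hQ : ∀ a, Q a = ∑ b, P a b)
    (J : X → Y → ℝ) (hJ : ∀ a b, Q a ≠ 0 → J a b = P a b / Q a)
    (hJ0 : ∀ a b, 0 ≤ J a b) (hJ1 : ∀ a, ∑ b, J a b = 1)
    (ε : ℝ) (hε : 0 < ε)
    (x : Fin n → X) (hx : x ∈ typSet n Q (ε / (2 * Fintype.card Y))) :
    (∑ᶠ y ∈ condTypSet n P ε x, ∏ i, J (x i) (y i)) >
        1 - deltaT X Y n (ε / 2) ∧
      Tendsto (fun m : ℕ => deltaT X Y m (ε / 2)) atTop (nhds 0) := by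
  classical
  have hcX : (0:ℝ) < Fintype.card X := by exact_mod_cast Fintype.card_pos
  have hcY : (0:ℝ) < Fintype.card Y := by exact_mod_cast Fintype.card_pos
  set kX : ℝ := (Fintype.card X : ℝ) with hkX
  set kY : ℝ := (Fintype.card Y : ℝ) with hkY
  have hkX0 : kX ≠ 0 := hcX.ne'
  have hkY0 : kY ≠ 0 := hcY.ne'
  set K : ℕ := Fintype.card X * Fintype.card Y with hK
  have hKpos : (0:ℝ) < (K:ℝ) := by
    rw [hK]; push_cast; nlinarith
  set t : ℝ := ε / (2 * (kX * kY)) with htdef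
  have ht : 0 < t := by rw [htdef]; positivity
  -- Part 2 : the limit
  have htend : Tendsto (fun m : ℕ => deltaT X Y m (ε / 2)) atTop (nhds 0) := by
    have hc : (0:ℝ) < (ε/2)^2 / (2 * kX^2 * kY^2) := by positivity
    set c : ℝ := (ε/2)^2 / (2 * kX^2 * kY^2) with hcdef
    have h1 : Tendsto (fun m : ℕ => c * ((m:ℝ)+1)) atTop atTop := by
      apply Tendsto.const_mul_atTop hc
      exact tendsto_atTop_add_const_right _ 1 tendsto_natCast_atTop_atTop
    have h2 := (Real.tendsto_pow_mul_exp_neg_atTop_nhds_zero K).comp h1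
    have h3 := h2.const_mul ((c⁻¹)^K * Real.exp c)
    rw [mul_zero] at h3
    refine Tendsto.congr (fun m => ?_) h3
    show (c⁻¹)^K * Real.exp c * ((c * ((m:ℝ)+1))^K * Real.exp (-(c * ((m:ℝ)+1))))
        = deltaT X Y m (ε/2)
    have e1 : (c⁻¹)^K * (c * ((m:ℝ)+1))^K = ((m:ℝ)+1)^K := by
      rw [← mul_pow, inv_mul_cancel_left₀ hc.ne']
    have e2 : Real.exp c * Real.exp (-(c * ((m:ℝ)+1)))
        = Real.exp (-(m:ℝ) * (ε/2)^2 * Real.log (Real.exp 1) / (2 * kX^2 * kY^2)) := by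
      rw [← Real.exp_add, Real.log_exp]
      congr 1
      rw [hcdef]
      field_simp
      ring
    calc (c⁻¹)^K * Real.exp c * ((c * ((m:ℝ)+1))^K * Real.exp (-(c * ((m:ℝ)+1))))
        = ((c⁻¹)^K * (c * ((m:ℝ)+1))^K) * (Real.exp c * Real.exp (-(c * ((m:ℝ)+1)))) := by
          ring
      _ = ((m:ℝ)+1)^K *
            Real.exp (-(m:ℝ) * (ε/2)^2 * Real.log (Real.exp 1) / (2 * kX^2 * kY^2)) := by
          rw [e1, e2]
      _ = deltaT X Y m (ε/2) := rfl
  refine ⟨?_, htend⟩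
  -- basic facts
  have hJle1 : ∀ a b, J a b ≤ 1 := by
    intro a b
    calc J a b ≤ ∑ b', J a b' := Finset.single_le_sum (fun b' _ => hJ0 a b') (mem_univ b)
      _ = 1 := hJ1 a
  have hQ0 : ∀ a, 0 ≤ Q a := by
    intro a; rw [hQ a]; exact Finset.sum_nonneg fun b _ => hP0 a b
  have hPleQ : ∀ a b, P a b ≤ Q a := by
    intro a b; rw [hQ a]
    exact Finset.single_le_sum (fun b' _ => hP0 a b') (mem_univ b)
  rcases Nat.eq_zero_or_pos n with hn0 | hn
  · -- n = 0 : everything is typical and deltaT = 1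
    subst hn0
    have hall : condTypSet 0 P ε x = Set.univ := by
      ext y
      simp only [condTypSet, jointTypSet, Set.mem_setOf_eq, Set.mem_univ, iff_true]
      constructor
      · intro a b
        have hjt : jointType x y a b = 0 := by simp [jointType]
        have hQa : Q a < ε / (2 * (kX * kY)) := by
          have h := hx.1 a
          have hemp : empType x a = 0 := by simp [empType]
          rw [hemp, zero_sub, abs_neg, abs_of_nonneg (hQ0 a)] at h
          calc Q a < ε / (2 * kY) / kX := h
            _ = ε / (2 * (kX * kY)) := by rw [div_div]; congr 1; ring
        rw [hjt, zero_sub, abs_neg, abs_of_nonneg (hP0 a b)]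
        calc P a b ≤ Q a := hPleQ a b
          _ < ε / (2 * (kX * kY)) := hQa
          _ ≤ ε / (kX * kY) := by
              apply div_le_div_of_nonneg_left hε.le (by positivity)
              nlinarith
      · intro a b _; simp [jointType]
    rw [hall]
    have h1 : (∑ᶠ y ∈ (Set.univ : Set (Fin 0 → Y)), ∏ i, J (x i) (y i))
        = ∑ y : Fin 0 → Y, ∏ i, J (x i) (y i) := by
      rw [finsum_mem_univ, finsum_eq_sum_of_fintype]
    rw [h1]
    have h2 : ∑ y : Fin 0 → Y, ∏ i, J (x i) (y i) = 1 := by simp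
    have h3 : deltaT X Y 0 (ε/2) = 1 := by simp [deltaT]
    rw [h2, h3]; norm_num
  -- main case
  have hn' : (0:ℝ) < n := by exact_mod_cast hn
  set μ : (Fin n → Y) → ℝ := fun y => ∏ i, J (x i) (y i) with hμdef
  have hμ0 : ∀ y, 0 ≤ μ y := fun y => Finset.prod_nonneg fun i _ => hJ0 _ _
  have hμsum : ∑ y : Fin n → Y, μ y = 1 := by
    calc ∑ y : Fin n → Y, ∏ i, J (x i) (y i)
        = ∏ i, ∑ b, J (x i) b := (Fintype.prod_sum _).symm
      _ = 1 := by
        rw [Finset.prod_congr rfl fun i _ => hJ1 (x i)]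
        exact Finset.prod_const_one
  set G : Finset (Fin n → Y) := univ.filter (fun y => y ∈ condTypSet n P ε x) with hGdef
  have hfin : (∑ᶠ y ∈ condTypSet n P ε x, ∏ i, J (x i) (y i)) = ∑ y ∈ G, μ y := by
    rw [← finsum_mem_coe_finset]
    congr 1
    ext y
    simp [hGdef, hμdef]
  set Bad : Finset (Fin n → Y) := univ.filter (fun y => ¬ y ∈ condTypSet n P ε x) with hBdef
  have hsplit : ∑ y ∈ G, μ y + ∑ y ∈ Bad, μ y = 1 := by
    rw [hGdef, hBdef, Finset.sum_filter_add_sum_filter_not univ _ μ]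
    exact hμsum
  set T : X → Finset (Fin n) := fun a => univ.filter (fun k => x k = a) with hTdef
  set Bp : X → Y → Finset (Fin n → Y) := fun a b => univ.filter (fun y =>
    2*(n:ℝ)*t^2 ≤ (2*t) * ((((T a).filter (fun k => y k = b)).card : ℝ)
      - (T a).card * J a b)) with hBpdef
  set Bm : X → Y → Finset (Fin n → Y) := fun a b => univ.filter (fun y =>
    2*(n:ℝ)*t^2 ≤ (-(2*t)) * ((((T a).filter (fun k => y k = b)).card : ℝ)
      - (T a).card * J a b)) with hBmdef
  have htail : ∀ (a : X) (b : Y) (L : ℝ), L^2 = (2*t)^2 →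
      ∑ y ∈ univ.filter (fun y : Fin n → Y =>
        2*(n:ℝ)*t^2 ≤ L * ((((T a).filter (fun k => y k = b)).card : ℝ)
          - (T a).card * J a b)), μ y
      ≤ Real.exp (-(n:ℝ)*t^2) := by
    intro a b L hL
    have hp : ∀ i ∈ T a, J (x i) b = J a b := by
      intro i hi
      rw [hTdef] at hi
      rw [(Finset.mem_filter.mp hi).2]
    have h := chernoff_tail (fun i b' => J (x i) b') (fun i b' => hJ0 _ _)
      (fun i => hJ1 (x i)) (T a) b (J a b) hp (hJ0 a b) (hJle1 a b) L (2*(n:ℝ)*t^2)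
    calc ∑ y ∈ univ.filter (fun y : Fin n → Y =>
          2*(n:ℝ)*t^2 ≤ L * ((((T a).filter (fun k => y k = b)).card : ℝ)
            - (T a).card * J a b)), μ y
        ≤ Real.exp ((n:ℝ)*L^2/4 - 2*(n:ℝ)*t^2) := h
      _ = Real.exp (-(n:ℝ)*t^2) := by rw [hL]; congr 1; ring
  have hcover : ∀ y ∈ Bad, μ y ≠ 0 →
      ∃ ab : X × Y, y ∈ Bp ab.1 ab.2 ∪ Bm ab.1 ab.2 := by
    intro y hy hμy
    have hynot : y ∉ condTypSet n P ε x := by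
      have := (Finset.mem_filter.mp hy).2
      exact this
    have hsupp : ∀ a b, P a b = 0 → jointType x y a b = 0 := by
      intro a b hPab
      by_contra hjt
      have hcard : (univ.filter (fun k : Fin n => x k = a ∧ y k = b)).Nonempty := by
        rw [← Finset.card_pos]
        rcases Nat.eq_zero_or_pos (univ.filter (fun k : Fin n => x k = a ∧ y k = b)).card
          with hc | hc
        · exact absurd (by simp [jointType, hc]) hjt
        · exact hc
      obtain ⟨k, hk⟩ := hcard
      rw [Finset.mem_filter] at hk
      obtain ⟨-, hxk, hyk⟩ := hk
      by_cases hQa : Q a = 0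
      · have hemp := hx.2 a hQa
        have h' : ((univ.filter (fun k : Fin n => x k = a)).card : ℝ) / n = 0 := hemp
        rw [div_eq_zero_iff] at h'
        rcases h' with h' | h'
        · have hc0 : (univ.filter (fun k : Fin n => x k = a)) = ∅ :=
            Finset.card_eq_zero.mp (by exact_mod_cast h')
          have hkm : k ∈ univ.filter (fun k : Fin n => x k = a) :=
            Finset.mem_filter.mpr ⟨mem_univ k, hxk⟩
          rw [hc0] at hkm
          exact absurd hkm (Finset.notMem_empty k)
        · exact absurd h' hn'.ne'
      · have hJab : J a b = 0 := by rw [hJ a b hQa, hPab, zero_div]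
        apply hμy
        show ∏ i, J (x i) (y i) = 0
        refine Finset.prod_eq_zero (mem_univ k) ?_
        rw [hxk, hyk, hJab]
    have hfail : ¬ ∀ a b, |jointType x y a b - P a b| < ε / (kX * kY) := by
      intro hok
      exact hynot ⟨hok, hsupp⟩
    push_neg at hfail
    obtain ⟨a, b, hab⟩ := hfail
    refine ⟨(a, b), ?_⟩
    have hQa : Q a ≠ 0 := by
      intro h0
      have hPab : P a b = 0 := le_antisymm (by rw [← h0]; exact hPleQ a b) (hP0 a b)
      rw [hsupp a b hPab, hPab, sub_zero, abs_zero] at hab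
      have : (0:ℝ) < ε / (kX * kY) := by positivity
      linarith
    have hPJQ : P a b = J a b * Q a := by rw [hJ a b hQa]; field_simp
    have hemp : |empType x a - Q a| < t := by
      have h := hx.1 a
      calc |empType x a - Q a| < ε / (2 * kY) / kX := h
        _ = t := by rw [htdef, div_div]; congr 1; ring
    set Sr : ℝ := ((univ.filter (fun k : Fin n => x k = a ∧ y k = b)).card : ℝ) with hSr
    set mr : ℝ := ((T a).card : ℝ) with hmr
    have hjt : jointType x y a b = Sr / n := rfl
    have het : empType x a = mr / n := rfl
    have h2t : ε / (kX * kY) = 2 * t := by rw [htdef]; field_simp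
    rw [h2t, hjt] at hab
    rw [het] at hemp
    have hJb0 := hJ0 a b
    have hJb1 := hJle1 a b
    have key : (n:ℝ) * t ≤ |Sr - mr * J a b| := by
      have hB : |J a b * (Q a - mr/n)| < t := by
        rw [abs_mul]
        have hJa : |J a b| ≤ 1 := by rw [abs_of_nonneg hJb0]; exact hJb1
        have h1 : |Q a - mr/n| < t := by rw [abs_sub_comm]; exact hemp
        calc |J a b| * |Q a - mr/n| ≤ 1 * |Q a - mr/n| :=
              mul_le_mul_of_nonneg_right hJa (abs_nonneg _)
          _ < t := by rw [one_mul]; exact h1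
      have hsum : Sr/n - mr/n * J a b = (Sr/n - P a b) + J a b * (Q a - mr/n) := by
        rw [hPJQ]; ring
      have htri := abs_sub_abs_le_abs_sub (Sr/n - P a b) (-(J a b * (Q a - mr/n)))
      rw [abs_neg, sub_neg_eq_add, ← hsum] at htri
      have ht' : t ≤ |Sr/n - mr/n * J a b| := by linarith
      have hdiv : |Sr/n - mr/n * J a b| = |Sr - mr * J a b| / n := by
        have he : Sr/n - mr/n * J a b = (Sr - mr * J a b)/n := by ring
        rw [he, abs_div, abs_of_pos hn']
      rw [hdiv] at ht'
      have := (le_div_iff₀ hn').mp ht'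
      linarith
    have hSr' : (((T a).filter (fun k => y k = b)).card : ℝ) = Sr := by
      rw [hSr]
      congr 2
      rw [hTdef, Finset.filter_filter]
    rcases le_abs.mp key with hpos | hneg
    · refine Finset.mem_union_left _ ?_
      rw [hBpdef]
      refine Finset.mem_filter.mpr ⟨mem_univ y, ?_⟩
      rw [hSr']
      have hmul := mul_le_mul_of_nonneg_left hpos (by positivity : (0:ℝ) ≤ 2*t)
      calc 2*(n:ℝ)*t^2 = 2*t*((n:ℝ)*t) := by ring
        _ ≤ 2*t*(Sr - mr * J a b) := hmul
    · refine Finset.mem_union_right _ ?_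
      rw [hBmdef]
      refine Finset.mem_filter.mpr ⟨mem_univ y, ?_⟩
      rw [hSr']
      have hmul := mul_le_mul_of_nonneg_left hneg (by positivity : (0:ℝ) ≤ 2*t)
      calc 2*(n:ℝ)*t^2 = 2*t*((n:ℝ)*t) := by ring
        _ ≤ 2*t*(-(Sr - mr * J a b)) := hmul
        _ = (-(2*t))*(Sr - mr * J a b) := by ring
  have hbadle : ∑ y ∈ Bad, μ y ≤ 2*(K:ℝ)*Real.exp (-(n:ℝ)*t^2) := by
    have h1 : ∑ y ∈ Bad.filter (fun y => μ y ≠ 0), μ y = ∑ y ∈ Bad, μ y :=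
      Finset.sum_filter_ne_zero Bad
    have h2 : Bad.filter (fun y => μ y ≠ 0) ⊆
        (univ : Finset (X × Y)).biUnion (fun ab => Bp ab.1 ab.2 ∪ Bm ab.1 ab.2) := by
      intro y hy
      rw [Finset.mem_filter] at hy
      obtain ⟨ab, hab⟩ := hcover y hy.1 hy.2
      exact Finset.mem_biUnion.mpr ⟨ab, mem_univ ab, hab⟩
    calc ∑ y ∈ Bad, μ y = ∑ y ∈ Bad.filter (fun y => μ y ≠ 0), μ y := h1.symm
      _ ≤ ∑ y ∈ (univ : Finset (X×Y)).biUnion (fun ab => Bp ab.1 ab.2 ∪ Bm ab.1 ab.2), μ y :=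
          Finset.sum_le_sum_of_subset_of_nonneg h2 (fun y _ _ => hμ0 y)
      _ ≤ ∑ ab : X × Y, ∑ y ∈ Bp ab.1 ab.2 ∪ Bm ab.1 ab.2, μ y :=
          sum_biUnion_le' _ _ _ hμ0
      _ ≤ ∑ _ab : X × Y, (Real.exp (-(n:ℝ)*t^2) + Real.exp (-(n:ℝ)*t^2)) := by
          refine Finset.sum_le_sum fun ab _ => ?_
          calc ∑ y ∈ Bp ab.1 ab.2 ∪ Bm ab.1 ab.2, μ y
              ≤ ∑ y ∈ Bp ab.1 ab.2, μ y + ∑ y ∈ Bm ab.1 ab.2, μ y :=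
                sum_union_le _ _ _ hμ0
            _ ≤ Real.exp (-(n:ℝ)*t^2) + Real.exp (-(n:ℝ)*t^2) :=
                add_le_add (htail ab.1 ab.2 (2*t) rfl) (htail ab.1 ab.2 (-(2*t)) (by ring))
      _ = 2*(K:ℝ)*Real.exp (-(n:ℝ)*t^2) := by
          rw [Finset.sum_const, Finset.card_univ, Fintype.card_prod, nsmul_eq_mul, hK]
          push_cast
          ring
  have hdelta : 2*(K:ℝ)*Real.exp (-(n:ℝ)*t^2) < deltaT X Y n (ε/2) := by
    have hexp : Real.exp (-(n:ℝ)*t^2) < Real.exp (-(n:ℝ)*t^2/2) := by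
      apply Real.exp_lt_exp.mpr
      have hpos : (0:ℝ) < (n:ℝ)*t^2 := by positivity
      linarith
    have hpow : (2*(K:ℝ)) ≤ ((n:ℝ)+1)^K := by
      have h1 : ((2:ℝ))^K ≤ ((n:ℝ)+1)^K := by
        apply pow_le_pow_left₀ (by norm_num)
        have : (1:ℝ) ≤ n := by exact_mod_cast hn
        linarith
      have h2 : (2*(K:ℝ)) ≤ (2:ℝ)^K := by exact_mod_cast two_mul_le_two_pow K
      linarith
    have hdT : deltaT X Y n (ε/2) = ((n:ℝ)+1)^K * Real.exp (-(n:ℝ)*t^2/2) := by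
      show ((n:ℝ)+1)^K * Real.exp (-(n:ℝ) * (ε/2)^2 * Real.log (Real.exp 1) /
        (2 * kX^2 * kY^2)) = ((n:ℝ)+1)^K * Real.exp (-(n:ℝ)*t^2/2)
      congr 1
      rw [Real.log_exp, htdef]
      field_simp
    rw [hdT]
    calc 2*(K:ℝ)*Real.exp (-(n:ℝ)*t^2) < 2*(K:ℝ)*Real.exp (-(n:ℝ)*t^2/2) := by
          apply mul_lt_mul_of_pos_left hexp
          positivity
      _ ≤ ((n:ℝ)+1)^K * Real.exp (-(n:ℝ)*t^2/2) :=
          mul_le_mul_of_nonneg_right hpow (Real.exp_pos _).le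
  rw [hfin]
  linarith
end

section
/- Concentration of output type: let p_{Y|X} be a channel from finite X to finite Y matching a conditional type J, let Q be a distribution on Y, and suppose N ∈ P_pim(Q, p_{Y|X}), i.e., Σ_a N(a)J(·|a) = Q. If the input sequences x^(n) satisfy V(N, P_{x^(n)}) → 0 in probability, then the channel outputs y^(n) satisfy V(Q, P_{y^(n)}) → 0 in probability. -/
open Finset Filter

-- Auxiliary lemmas ------------------------------------------------------

lemma finsum_cond {α : Type*} [Fintype α] (P : α → Prop) [DecidablePred P] (f : α → ℝ) :
    (∑ᶠ (a : α) (_ : P a), f a) = ∑ a ∈ Finset.univ.filter P, f a := by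
  have h1 : ∀ a : α, (∑ᶠ _ : P a, f a) = if P a then f a else 0 := fun a => finsum_eq_if
  rw [finsum_congr h1, finsum_eq_sum_of_fintype, Finset.sum_filter]

lemma sum_prod_eq' {Y : Type*} [Fintype Y] [DecidableEq Y] {n : ℕ} (g : Fin n → Y → ℝ) :
    ∑ y : Fin n → Y, ∏ i, g i (y i) = ∏ i, ∑ b, g i b := by
  rw [Finset.prod_univ_sum, Fintype.piFinset_univ]

/-- centered indicator of the output letter -/
noncomputable def dd {X Y : Type*} [DecidableEq Y] {n : ℕ}
    (W : X → Y → ℝ) (x : Fin n → X) (b : Y) (k : Fin n) (c : Y) : ℝ :=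
  (if c = b then 1 else 0) - W (x k) b

section Helpers

variable {X Y : Type*} [Fintype X] [Fintype Y] [DecidableEq X] [DecidableEq Y] {n : ℕ}

lemma weight_nonneg (W : X → Y → ℝ) (hW0 : ∀ a b, 0 ≤ W a b) (x : Fin n → X)
    (y : Fin n → Y) : 0 ≤ ∏ k, W (x k) (y k) :=
  Finset.prod_nonneg fun k _ => hW0 _ _

lemma weight_sum_one (W : X → Y → ℝ) (hW1 : ∀ a, ∑ b, W a b = 1) (x : Fin n → X) :
    ∑ y : Fin n → Y, ∏ k, W (x k) (y k) = 1 := by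
  rw [sum_prod_eq' (fun k c => W (x k) c)]
  simp [hW1]

lemma dd_mean_zero (W : X → Y → ℝ) (hW1 : ∀ a, ∑ b, W a b = 1)
    (x : Fin n → X) (b : Y) (k : Fin n) : ∑ c, W (x k) c * dd W x b k c = 0 := by
  simp only [dd, mul_sub, Finset.sum_sub_distrib, mul_ite, mul_one, mul_zero]
  rw [Finset.sum_ite_eq' Finset.univ b (fun c => W (x k) c), ← Finset.sum_mul, hW1]
  simp

lemma cross_zero (W : X → Y → ℝ) (hW1 : ∀ a, ∑ b, W a b = 1)
    (x : Fin n → X) (b : Y) {i j : Fin n} (hij : i ≠ j) :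
    ∑ y : Fin n → Y, (∏ k, W (x k) (y k)) * dd W x b i (y i) * dd W x b j (y j) = 0 := by
  have key : ∀ y : Fin n → Y, (∏ k, W (x k) (y k)) * dd W x b i (y i) * dd W x b j (y j)
      = ∏ k, (fun k c => W (x k) c * (if k = i then dd W x b i c else 1)
          * (if k = j then dd W x b j c else 1)) k (y k) := by
    intro y
    simp only
    rw [Finset.prod_mul_distrib, Finset.prod_mul_distrib,
      Finset.prod_ite_eq' Finset.univ i (fun k => dd W x b i (y k)),
      Finset.prod_ite_eq' Finset.univ j (fun k => dd W x b j (y k))]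
    simp
  rw [Finset.sum_congr rfl fun y _ => key y, sum_prod_eq' (fun k c =>
    (W (x k) c * if k = i then dd W x b i c else 1) * if k = j then dd W x b j c else 1)]
  apply Finset.prod_eq_zero (Finset.mem_univ i)
  simp only [if_pos rfl, if_neg hij, mul_one]
  exact dd_mean_zero W hW1 x b i

lemma dd_sq_le_one (W : X → Y → ℝ) (hW0 : ∀ a b, 0 ≤ W a b) (hW1 : ∀ a, ∑ b, W a b = 1)
    (x : Fin n → X) (b : Y) (k : Fin n) (c : Y) : (dd W x b k c)^2 ≤ 1 := by
  have h1 : W (x k) b ≤ 1 := by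
    rw [← hW1 (x k)]
    exact Finset.single_le_sum (fun c _ => hW0 _ c) (Finset.mem_univ b)
  have h0 := hW0 (x k) b
  unfold dd; split <;> nlinarith

lemma second_moment (W : X → Y → ℝ) (hW0 : ∀ a b, 0 ≤ W a b) (hW1 : ∀ a, ∑ b, W a b = 1)
    (x : Fin n → X) (b : Y) :
    ∑ y : Fin n → Y, (∏ k, W (x k) (y k)) * (∑ i, dd W x b i (y i))^2 ≤ n := by
  have expand : ∀ y : Fin n → Y, (∏ k, W (x k) (y k)) * (∑ i, dd W x b i (y i))^2
      = ∑ i, ∑ j, (∏ k, W (x k) (y k)) * dd W x b i (y i) * dd W x b j (y j) := by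
    intro y
    rw [sq, Finset.sum_mul_sum, Finset.mul_sum]
    exact Finset.sum_congr rfl fun i _ => by
      rw [Finset.mul_sum]; exact Finset.sum_congr rfl fun j _ => by ring
  rw [Finset.sum_congr rfl fun y _ => expand y, Finset.sum_comm]
  have diag : ∀ i : Fin n, ∑ y : Fin n → Y, ∑ j,
      (∏ k, W (x k) (y k)) * dd W x b i (y i) * dd W x b j (y j) ≤ 1 := by
    intro i
    rw [Finset.sum_comm]
    have hz : ∀ j ∈ Finset.univ, j ≠ i → ∑ y : Fin n → Y,
        (∏ k, W (x k) (y k)) * dd W x b i (y i) * dd W x b j (y j) = 0 := by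
      intro j _ hj
      exact cross_zero W hW1 x b (Ne.symm hj)
    rw [Finset.sum_eq_single_of_mem i (Finset.mem_univ i) hz]
    calc ∑ y : Fin n → Y, (∏ k, W (x k) (y k)) * dd W x b i (y i) * dd W x b i (y i)
        ≤ ∑ y : Fin n → Y, (∏ k, W (x k) (y k)) := by
          apply Finset.sum_le_sum
          intro y _
          have h2 : dd W x b i (y i) * dd W x b i (y i) ≤ 1 := by
            have := dd_sq_le_one W hW0 hW1 x b i (y i); nlinarith [this]
          have hw := weight_nonneg W hW0 x y
          calc (∏ k, W (x k) (y k)) * dd W x b i (y i) * dd W x b i (y i)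
              = (∏ k, W (x k) (y k)) * (dd W x b i (y i) * dd W x b i (y i)) := by ring
            _ ≤ (∏ k, W (x k) (y k)) * 1 := by exact mul_le_mul_of_nonneg_left h2 hw
            _ = _ := by ring
      _ = 1 := weight_sum_one W hW1 x
  calc ∑ i : Fin n, ∑ y : Fin n → Y, ∑ j, (∏ k, W (x k) (y k)) * dd W x b i (y i) * dd W x b j (y j)
      ≤ ∑ _i : Fin n, (1:ℝ) := Finset.sum_le_sum fun i _ => diag i
    _ = n := by simp

lemma empType_eq' {Z : Type*} [Fintype Z] [DecidableEq Z] (z : Fin n → Z) (a : Z) :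
    empType z a = (∑ i, if z i = a then (1:ℝ) else 0) / n := by
  unfold empType
  congr 1
  rw [Finset.card_filter]
  push_cast
  exact Finset.sum_congr rfl fun i _ => by split <;> simp

lemma dev_eq (W : X → Y → ℝ) (x : Fin n → X) (b : Y) (y : Fin n → Y) :
    empType y b - (∑ i, W (x i) b) / n = (∑ i, dd W x b i (y i)) / n := by
  rw [empType_eq', div_sub_div_same]
  congr 1
  rw [← Finset.sum_sub_distrib]
  simp only [dd]

lemma cheb (W : X → Y → ℝ) (hW0 : ∀ a b, 0 ≤ W a b) (hW1 : ∀ a, ∑ b, W a b = 1)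
    (x : Fin n → X) (b : Y) (hn : 0 < n) {δ : ℝ} (hδ : 0 < δ) :
    ∑ y ∈ Finset.univ.filter
        (fun y : Fin n → Y => δ < |empType y b - (∑ i, W (x i) b) / (n:ℝ)|),
      ∏ k, W (x k) (y k) ≤ 1 / (n * δ^2) := by
  have hn' : (0:ℝ) < n := by exact_mod_cast hn
  have hc : (0:ℝ) < ((n:ℝ)*δ)^2 := by positivity
  have step1 : ∀ y ∈ Finset.univ.filter
      (fun y : Fin n → Y => δ < |empType y b - (∑ i, W (x i) b)/(n:ℝ)|),
      (∏ k, W (x k) (y k)) ≤ (∏ k, W (x k) (y k)) * ((∑ i, dd W x b i (y i))^2 / ((n:ℝ)*δ)^2) := by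
    intro y hy
    rw [Finset.mem_filter] at hy
    have hdev : δ < |(∑ i, dd W x b i (y i)) / (n:ℝ)| := by
      rw [← dev_eq W x b y]; exact hy.2
    set S := ∑ i, dd W x b i (y i) with hS
    have habs : (n:ℝ)*δ < |S| := by
      rw [abs_div, abs_of_pos hn'] at hdev
      calc (n:ℝ)*δ < (n:ℝ) * (|S|/(n:ℝ)) := by exact mul_lt_mul_of_pos_left hdev hn'
        _ = |S| := by field_simp
    have h2 : ((n:ℝ)*δ)^2 < S^2 := by
      have := sq_abs S
      nlinarith [abs_nonneg S, mul_pos hn' hδ]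
    have hq : (1:ℝ) ≤ S^2 / ((n:ℝ)*δ)^2 := (one_le_div hc).mpr h2.le
    exact le_mul_of_one_le_right (weight_nonneg W hW0 x y) hq
  calc ∑ y ∈ Finset.univ.filter
        (fun y : Fin n → Y => δ < |empType y b - (∑ i, W (x i) b)/(n:ℝ)|),
      ∏ k, W (x k) (y k)
      ≤ ∑ y ∈ Finset.univ.filter
          (fun y : Fin n → Y => δ < |empType y b - (∑ i, W (x i) b)/(n:ℝ)|),
        (∏ k, W (x k) (y k)) * ((∑ i, dd W x b i (y i))^2 / ((n:ℝ)*δ)^2) :=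
        Finset.sum_le_sum step1
    _ ≤ ∑ y : Fin n → Y, (∏ k, W (x k) (y k)) * ((∑ i, dd W x b i (y i))^2 / ((n:ℝ)*δ)^2) := by
        refine Finset.sum_le_sum_of_subset_of_nonneg (Finset.filter_subset _ _) fun y _ _ => ?_
        have := weight_nonneg W hW0 x y
        positivity
    _ = (∑ y : Fin n → Y, (∏ k, W (x k) (y k)) * (∑ i, dd W x b i (y i))^2) / ((n:ℝ)*δ)^2 := by
        rw [Finset.sum_div]
        exact Finset.sum_congr rfl fun y _ => (mul_div_assoc _ _ _).symm
    _ ≤ (n:ℝ) / ((n:ℝ)*δ)^2 :=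
        (div_le_div_iff_of_pos_right hc).mpr (second_moment W hW0 hW1 x b)
    _ = 1 / (n * δ^2) := by field_simp

lemma mean_eq (W : X → Y → ℝ) (x : Fin n → X) (b : Y) :
    (∑ i, W (x i) b) / (n:ℝ) = ∑ a, empType x a * W a b := by
  have h1 : (∑ i, W (x i) b) = ∑ a, ((Finset.univ.filter (fun i => x i = a)).card : ℝ) * W a b := by
    have h2 : ∀ i, W (x i) b = ∑ a, if x i = a then W a b else 0 := by
      intro i
      rw [Finset.sum_ite_eq Finset.univ (x i) (fun a => W a b)]
      simp
    rw [Finset.sum_congr rfl fun i _ => h2 i, Finset.sum_comm]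
    refine Finset.sum_congr rfl fun a _ => ?_
    rw [← Finset.sum_filter, Finset.sum_const, nsmul_eq_mul]
  rw [h1, Finset.sum_div]
  refine Finset.sum_congr rfl fun a _ => ?_
  rw [empType, mul_div_right_comm]

lemma decomp [Nonempty Y]
    (W : X → Y → ℝ) (hW0 : ∀ a b, 0 ≤ W a b) (hW1 : ∀ a, ∑ b, W a b = 1)
    (N : X → ℝ) (Q : Y → ℝ) (hpre : ∀ b, ∑ a, N a * W a b = Q b)
    {ε : ℝ} (hε : 0 < ε) (x : Fin n → X) (y : Fin n → Y)
    (hB : ε < ∑ b, |Q b - empType y b|) :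
    (ε/2 < ∑ a, |N a - empType x a|) ∨
      ∃ b, ε/(2*(Fintype.card Y:ℝ)) < |empType y b - (∑ i, W (x i) b)/(n:ℝ)| := by
  by_contra h
  push_neg at h
  obtain ⟨h1, h2⟩ := h
  have hcY : (0:ℝ) < (Fintype.card Y : ℝ) := by
    exact_mod_cast Fintype.card_pos
  have hQM : ∀ b, Q b - (∑ i, W (x i) b)/(n:ℝ) = ∑ a, (N a - empType x a) * W a b := by
    intro b
    rw [mean_eq, ← hpre b, ← Finset.sum_sub_distrib]
    exact Finset.sum_congr rfl fun a _ => by ring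
  have hQMle : ∑ b, |Q b - (∑ i, W (x i) b)/(n:ℝ)| ≤ ∑ a, |N a - empType x a| := by
    calc ∑ b, |Q b - (∑ i, W (x i) b)/(n:ℝ)|
        ≤ ∑ b, ∑ a, |N a - empType x a| * W a b := by
          refine Finset.sum_le_sum fun b _ => ?_
          rw [hQM b]
          refine (Finset.abs_sum_le_sum_abs _ _).trans ?_
          refine Finset.sum_le_sum fun a _ => ?_
          rw [abs_mul, abs_of_nonneg (hW0 a b)]
      _ = ∑ a, |N a - empType x a| := by
          rw [Finset.sum_comm]
          refine Finset.sum_congr rfl fun a _ => ?_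
          rw [← Finset.mul_sum, hW1, mul_one]
  have hMP : ∑ b, |(∑ i, W (x i) b)/(n:ℝ) - empType y b| ≤ ε/2 := by
    calc ∑ b, |(∑ i, W (x i) b)/(n:ℝ) - empType y b|
        ≤ ∑ _b : Y, ε/(2*(Fintype.card Y:ℝ)) := by
          refine Finset.sum_le_sum fun b _ => ?_
          rw [abs_sub_comm]
          exact h2 b
      _ = ε/2 := by
          rw [Finset.sum_const, nsmul_eq_mul]
          field_simp
          rw [Finset.card_univ]
  have tri : ∑ b, |Q b - empType y b| ≤
      (∑ b, |Q b - (∑ i, W (x i) b)/(n:ℝ)|) + ∑ b, |(∑ i, W (x i) b)/(n:ℝ) - empType y b| := by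
    rw [← Finset.sum_add_distrib]
    refine Finset.sum_le_sum fun b _ => ?_
    calc |Q b - empType y b|
        = |(Q b - (∑ i, W (x i) b)/(n:ℝ)) + ((∑ i, W (x i) b)/(n:ℝ) - empType y b)| := by ring_nf
      _ ≤ _ := abs_add_le _ _
  linarith

lemma main_bound [Nonempty Y]
    (W : X → Y → ℝ) (hW0 : ∀ a b, 0 ≤ W a b) (hW1 : ∀ a, ∑ b, W a b = 1)
    (N : X → ℝ) (Q : Y → ℝ) (hpre : ∀ b, ∑ a, N a * W a b = Q b)
    (pn : (Fin n → X) → ℝ) (hpn0 : ∀ x, 0 ≤ pn x) (hpn1 : ∑ x, pn x = 1)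
    (hn : 0 < n) {ε : ℝ} (hε : 0 < ε) :
    ∑ q ∈ Finset.univ.filter
        (fun q : (Fin n → X) × (Fin n → Y) => ε < ∑ b, |Q b - empType q.2 b|),
      pn q.1 * ∏ i, W (q.1 i) (q.2 i)
    ≤ (∑ x ∈ Finset.univ.filter (fun x : Fin n → X => ε/2 < ∑ a, |N a - empType x a|), pn x)
      + (Fintype.card Y : ℝ) * (1/((n:ℝ) * (ε/(2*(Fintype.card Y:ℝ)))^2)) := by
  classical
  set δ := ε/(2*(Fintype.card Y:ℝ)) with hδdef
  have hcY : (0:ℝ) < (Fintype.card Y : ℝ) := by exact_mod_cast Fintype.card_pos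
  have hδ : 0 < δ := by positivity
  set f : (Fin n → X) × (Fin n → Y) → ℝ := fun q => pn q.1 * ∏ i, W (q.1 i) (q.2 i) with hf
  have hf0 : ∀ q, 0 ≤ f q := fun q =>
    mul_nonneg (hpn0 q.1) (weight_nonneg W hW0 q.1 q.2)
  have step1 :
      ∑ q ∈ Finset.univ.filter
        (fun q : (Fin n → X) × (Fin n → Y) => ε < ∑ b, |Q b - empType q.2 b|), f q
      ≤ (∑ q ∈ Finset.univ.filter
            (fun q : (Fin n → X) × (Fin n → Y) => ε/2 < ∑ a, |N a - empType q.1 a|), f q)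
        + ∑ b : Y, ∑ q ∈ Finset.univ.filter
            (fun q : (Fin n → X) × (Fin n → Y) =>
              δ < |empType q.2 b - (∑ i, W (q.1 i) b)/(n:ℝ)|), f q := by
    have hswap : ∀ b : Y, ∑ q ∈ Finset.univ.filter
            (fun q : (Fin n → X) × (Fin n → Y) =>
              δ < |empType q.2 b - (∑ i, W (q.1 i) b)/(n:ℝ)|), f q
        = ∑ q : (Fin n → X) × (Fin n → Y),
            if δ < |empType q.2 b - (∑ i, W (q.1 i) b)/(n:ℝ)| then f q else 0 :=
      fun b => Finset.sum_filter _ _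
    simp only [Finset.sum_filter, hswap]
    rw [Finset.sum_comm, ← Finset.sum_add_distrib]
    refine Finset.sum_le_sum fun q _ => ?_
    by_cases hB : ε < ∑ b, |Q b - empType q.2 b|
    · rw [if_pos hB]
      rcases decomp W hW0 hW1 N Q hpre hε q.1 q.2 hB with hA | ⟨b, hb⟩
      · rw [if_pos hA]
        have : (0:ℝ) ≤ ∑ b : Y, if δ < |empType q.2 b - (∑ i, W (q.1 i) b)/(n:ℝ)| then f q else 0 :=
          Finset.sum_nonneg fun b _ => by split; exacts [hf0 _, le_rfl]
        linarith
      · have h1 : f q ≤ ∑ b : Y, if δ < |empType q.2 b - (∑ i, W (q.1 i) b)/(n:ℝ)| then f q else 0 := by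
          rw [← hδdef] at hb
          calc f q = if δ < |empType q.2 b - (∑ i, W (q.1 i) b)/(n:ℝ)| then f q else 0 :=
                (if_pos hb).symm
            _ ≤ _ := Finset.single_le_sum
                (f := fun b : Y => if δ < |empType q.2 b - (∑ i, W (q.1 i) b)/(n:ℝ)| then f q else 0)
                (fun b _ => by split; exacts [hf0 _, le_rfl]) (Finset.mem_univ b)
        have h0 : (0:ℝ) ≤ if ε/2 < ∑ a, |N a - empType q.1 a| then f q else 0 := by
          split; exacts [hf0 _, le_rfl]
        linarith
    · rw [if_neg hB]
      have h1 : (0:ℝ) ≤ if ε/2 < ∑ a, |N a - empType q.1 a| then f q else 0 := by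
        split; exacts [hf0 _, le_rfl]
      have h2 : (0:ℝ) ≤ ∑ b : Y, if δ < |empType q.2 b - (∑ i, W (q.1 i) b)/(n:ℝ)| then f q else 0 :=
        Finset.sum_nonneg fun b _ => by split; exacts [hf0 _, le_rfl]
      linarith
  have term1 : ∑ q ∈ Finset.univ.filter
      (fun q : (Fin n → X) × (Fin n → Y) => ε/2 < ∑ a, |N a - empType q.1 a|), f q
      = ∑ x ∈ Finset.univ.filter (fun x : Fin n → X => ε/2 < ∑ a, |N a - empType x a|), pn x := by
    rw [Finset.sum_filter, Finset.sum_filter, Fintype.sum_prod_type]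
    refine Finset.sum_congr rfl fun x _ => ?_
    by_cases hA : ε/2 < ∑ a, |N a - empType x a|
    · simp only [if_pos hA, hf]
      rw [← Finset.mul_sum, weight_sum_one W hW1 x, mul_one]
    · simp only [if_neg hA, Finset.sum_const_zero]
  have term2 : ∀ b : Y, ∑ q ∈ Finset.univ.filter
      (fun q : (Fin n → X) × (Fin n → Y) =>
        δ < |empType q.2 b - (∑ i, W (q.1 i) b)/(n:ℝ)|), f q
      ≤ 1/((n:ℝ) * δ^2) := by
    intro b
    rw [Finset.sum_filter, Fintype.sum_prod_type]
    have perx : ∀ x : Fin n → X,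
        (∑ y : Fin n → Y, if δ < |empType y b - (∑ i, W (x i) b)/(n:ℝ)| then f (x, y) else 0)
        ≤ pn x * (1/((n:ℝ) * δ^2)) := by
      intro x
      have : (∑ y : Fin n → Y, if δ < |empType y b - (∑ i, W (x i) b)/(n:ℝ)| then f (x, y) else 0)
          = pn x * ∑ y ∈ Finset.univ.filter
              (fun y : Fin n → Y => δ < |empType y b - (∑ i, W (x i) b)/(n:ℝ)|),
              ∏ k, W (x k) (y k) := by
        rw [Finset.mul_sum, ← Finset.sum_filter]
      rw [this]
      exact mul_le_mul_of_nonneg_left (cheb W hW0 hW1 x b hn hδ) (hpn0 x)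
    calc (∑ x : Fin n → X, ∑ y : Fin n → Y,
          if δ < |empType (x, y).2 b - (∑ i, W ((x, y).1 i) b)/(n:ℝ)| then f (x, y) else 0)
        ≤ ∑ x : Fin n → X, pn x * (1/((n:ℝ) * δ^2)) := Finset.sum_le_sum fun x _ => perx x
      _ = 1/((n:ℝ) * δ^2) := by rw [← Finset.sum_mul, hpn1, one_mul]
  calc ∑ q ∈ Finset.univ.filter
        (fun q : (Fin n → X) × (Fin n → Y) => ε < ∑ b, |Q b - empType q.2 b|), f q
      ≤ _ := step1
    _ ≤ (∑ x ∈ Finset.univ.filter (fun x : Fin n → X => ε/2 < ∑ a, |N a - empType x a|), pn x)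
        + ∑ _b : Y, 1/((n:ℝ) * δ^2) := by
        rw [term1]
        exact add_le_add_right (Finset.sum_le_sum fun b _ => term2 b) _
    _ = _ := by rw [Finset.sum_const, nsmul_eq_mul, Finset.card_univ]

end Helpers


/-- concentration of the output type: if the input type converges
in probability to N and N is in the pre-image of Q under the channel, then the
output type converges in probability to Q. -/
theorem output_type_concentration
    {X Y : Type*} [Fintype X] [Fintype Y] [DecidableEq X] [DecidableEq Y]
    [Nonempty X] [Nonempty Y]
    (W : X → Y → ℝ) (hW0 : ∀ a b, 0 ≤ W a b) (hW1 : ∀ a, ∑ b, W a b = 1)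
    (N : X → ℝ) (hN0 : ∀ a, 0 ≤ N a) (hN1 : ∑ a, N a = 1)
    (Q : Y → ℝ) (hpre : ∀ b, ∑ a, N a * W a b = Q b)
    (p : (n : ℕ) → (Fin n → X) → ℝ)
    (hp0 : ∀ n x, 0 ≤ p n x) (hp1 : ∀ n, ∑ x, p n x = 1)
    (hin : ∀ ε > (0 : ℝ),
      Tendsto
        (fun n => ∑ᶠ x ∈ {x : Fin n → X | (∑ a, |N a - empType x a|) > ε}, p n x)
        atTop (nhds 0)) :
    ∀ ε > (0 : ℝ),
      Tendsto
        (fun n =>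
          ∑ᶠ q ∈ {q : (Fin n → X) × (Fin n → Y) |
              (∑ b, |Q b - empType q.2 b|) > ε},
            p n q.1 * ∏ i, W (q.1 i) (q.2 i))
        atTop (nhds 0) := by
    classical
  intro ε hε
  have hcY : (0:ℝ) < (Fintype.card Y : ℝ) := by exact_mod_cast Fintype.card_pos
  set δ := ε/(2*(Fintype.card Y:ℝ)) with hδdef
  have hδ : 0 < δ := by positivity
  have hεhalf : (0:ℝ) < ε/2 := by positivity
  have hh : Tendsto (fun n : ℕ =>
      (∑ᶠ x ∈ {x : Fin n → X | (∑ a, |N a - empType x a|) > ε/2}, p n x)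
      + (Fintype.card Y : ℝ) * (1/((n:ℝ) * δ^2))) atTop (nhds 0) := by
    have h1 := hin (ε/2) hεhalf
    have h2 : Tendsto (fun n : ℕ => (Fintype.card Y:ℝ) * (1/((n:ℝ) * δ^2)))
        atTop (nhds 0) := by
      have hrw : ∀ n : ℕ, (Fintype.card Y:ℝ) * (1/((n:ℝ) * δ^2))
          = ((Fintype.card Y:ℝ)/δ^2) * (1/(n:ℝ)) := by
        intro n
        rw [one_div, one_div, mul_inv]
        ring
      simp only [hrw]
      have := (tendsto_one_div_atTop_nhds_zero_nat).const_mul ((Fintype.card Y:ℝ)/δ^2)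
      simpa using this
    simpa using h1.add h2
  refine tendsto_of_tendsto_of_tendsto_of_le_of_le' tendsto_const_nhds hh ?_ ?_
  · refine Eventually.of_forall fun n => ?_
    have e1 : (∑ᶠ q ∈ {q : (Fin n → X) × (Fin n → Y) |
          (∑ b, |Q b - empType q.2 b|) > ε}, p n q.1 * ∏ i, W (q.1 i) (q.2 i))
        = ∑ q ∈ Finset.univ.filter
            (fun q : (Fin n → X) × (Fin n → Y) => ε < ∑ b, |Q b - empType q.2 b|),
          p n q.1 * ∏ i, W (q.1 i) (q.2 i) := finsum_cond _ _
    have h0 : (0:ℝ) ≤ ∑ q ∈ Finset.univ.filter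
            (fun q : (Fin n → X) × (Fin n → Y) => ε < ∑ b, |Q b - empType q.2 b|),
          p n q.1 * ∏ i, W (q.1 i) (q.2 i) :=
      Finset.sum_nonneg fun q _ =>
        mul_nonneg (hp0 n q.1) (weight_nonneg W hW0 q.1 q.2)
    exact h0.trans_eq e1.symm
  · filter_upwards [eventually_gt_atTop 0] with n hn
    have e1 : (∑ᶠ q ∈ {q : (Fin n → X) × (Fin n → Y) |
          (∑ b, |Q b - empType q.2 b|) > ε}, p n q.1 * ∏ i, W (q.1 i) (q.2 i))
        = ∑ q ∈ Finset.univ.filter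
            (fun q : (Fin n → X) × (Fin n → Y) => ε < ∑ b, |Q b - empType q.2 b|),
          p n q.1 * ∏ i, W (q.1 i) (q.2 i) := finsum_cond _ _
    have e2 : (∑ᶠ x ∈ {x : Fin n → X | (∑ a, |N a - empType x a|) > ε/2}, p n x)
        = ∑ x ∈ Finset.univ.filter
            (fun x : Fin n → X => ε/2 < ∑ a, |N a - empType x a|), p n x := finsum_cond _ _
    have e3 : (∑ x ∈ Finset.univ.filter
            (fun x : Fin n → X => ε/2 < ∑ a, |N a - empType x a|), p n x)
          + (Fintype.card Y : ℝ) * (1/((n:ℝ) * (ε/(2*(Fintype.card Y:ℝ)))^2))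
        = (∑ᶠ x ∈ {x : Fin n → X | (∑ a, |N a - empType x a|) > ε/2}, p n x)
          + (Fintype.card Y : ℝ) * (1/((n:ℝ) * δ^2)) := by
      rw [hδdef, e2]
    exact e1.trans_le ((main_bound W hW0 hW1 N Q hpre (p n) (hp0 n) (hp1 n) hn hε).trans_eq e3)
end
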